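/- In the symbolic slicing setup, for every τ ∈ S, every (ω,η) ∈ {0,…,n₁−1}^ℕ × {0,…,n₂−1}^ℕ and every subset A ⊆ X_{τ,ω,η}, the Hausdorff dimension of A (with respect to the metric d(x,y) = m₂^{−min{k ≥ 0 : x_k ≠ y_k}}) equals the Hausdorff dimension of π_{τ,ω,η}(A) in ℝ². -/

import Mathlib

open Set Filter
noncomputable section

/-- The binary coding sequence of `t` under the rotation by `θ`:
`v_t(n) = 1` iff `t + nθ (mod 1) ∈ [1−θ, 1)`. -/
def vseq (θ t : ℝ) : ℕ → Bool := fun n => decide (1 - θ ≤ Int.fract (t + n * θ))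

/-- `S`: the closure of `{v_t : t ∈ [0,1)}` in the product topology on `{0,1}^ℕ₀`. -/
def Sset (θ : ℝ) : Set (ℕ → Bool) :=
  closure { v | ∃ t ∈ Set.Ico (0 : ℝ) 1, v = vseq θ t }

/-- `x_{k+1}(τ)`: the (0-indexed) `k`-th position where `τ` equals `1`. -/
def nthOne (τ : ℕ → Bool) (k : ℕ) : ℕ := Nat.nth (fun n => τ n = true) k

/-- The symbolic space `X_{τ,ω,η}`: sequences `((a_n,b_n))_{n≥0}` with
`b_n ∈ Λ_{η_n}`, `a_{x_{k+1}(τ)} ∈ Γ_{ω_k}`, and `a_n = 1` off `Z(τ)`. -/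
def Xset (Γ Λ : ℕ → Set ℕ) (τ : ℕ → Bool) (ω η : ℕ → ℕ) : Set (ℕ → ℕ × ℕ) :=
  { c | (∀ n, (c n).2 ∈ Λ (η n)) ∧ (∀ k, (c (nthOne τ k)).1 ∈ Γ (ω k)) ∧
        (∀ n, τ n = false → (c n).1 = 1) }

/-- The projection `π_{τ,ω,η} : X_{τ,ω,η} → [0,1]²`. -/
def piSym (m₁ m₂ : ℕ) (τ : ℕ → Bool) (c : ℕ → ℕ × ℕ) : ℝ × ℝ :=
  (∑' k : ℕ, ((c (nthOne τ k)).1 : ℝ) / (m₁ : ℝ) ^ (k + 1),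
   ∑' k : ℕ, ((c k).2 : ℝ) / (m₂ : ℝ) ^ (k + 1))

/-- The symbolic metric `d(x,y) = m₂^{−min{k : x_k ≠ y_k}}`. -/
def symDist (m₂ : ℕ) (x y : ℕ → ℕ × ℕ) : ℝ :=
  letI := Classical.dec (x = y)
  if x = y then 0 else ((m₂ : ℝ) ^ sInf { k | x k ≠ y k })⁻¹

theorem symDist_nonneg (m₂ : ℕ) (x y : ℕ → ℕ × ℕ) : 0 ≤ symDist m₂ x y := by
  unfold symDist
  split
  · exact le_refl 0
  · exact inv_nonneg.2 (pow_nonneg (Nat.cast_nonneg _) _)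

theorem symDist_self (m₂ : ℕ) (x : ℕ → ℕ × ℕ) : symDist m₂ x x = 0 := by
  unfold symDist
  simp

theorem symDist_comm (m₂ : ℕ) (x y : ℕ → ℕ × ℕ) : symDist m₂ x y = symDist m₂ y x := by
  have hset : { k | x k ≠ y k } = { k | y k ≠ x k } := by
    ext k; exact ne_comm
  unfold symDist
  by_cases h : x = y
  · simp [h]
  · have h' : y ≠ x := fun e => h e.symm
    rw [if_neg h, if_neg h', hset]

theorem symDist_triangle (m₂ : ℕ) (hm : 2 ≤ m₂) (x y z : ℕ → ℕ × ℕ) :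
    symDist m₂ x z ≤ symDist m₂ x y + symDist m₂ y z := by
  by_cases hxz : x = z
  · have h0 : symDist m₂ x z = 0 := by unfold symDist; rw [if_pos hxz]
    rw [h0]
    exact add_nonneg (symDist_nonneg _ _ _) (symDist_nonneg _ _ _)
  by_cases hxy : x = y
  · subst hxy
    rw [symDist_self]
    linarith [le_refl (symDist m₂ x z)]
  by_cases hyz : y = z
  · subst hyz
    rw [symDist_self]
    linarith [le_refl (symDist m₂ x y)]
  -- main case: compare first-difference indices
  have hne : { k | x k ≠ z k }.Nonempty := Set.nonempty_def.2 (Function.ne_iff.1 hxz)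
  have hw : sInf { k | x k ≠ z k } ∈ { k | x k ≠ z k } := Nat.sInf_mem hne
  set w := sInf { k | x k ≠ z k } with hwdef
  have hkey : sInf { k | x k ≠ y k } ≤ w ∨ sInf { k | y k ≠ z k } ≤ w := by
    by_contra hcon
    push_neg at hcon
    have h1 : w ∉ { k | x k ≠ y k } := Nat.notMem_of_lt_sInf hcon.1
    have h2 : w ∉ { k | y k ≠ z k } := Nat.notMem_of_lt_sInf hcon.2
    simp only [Set.mem_setOf_eq, not_not] at h1 h2
    exact hw (h1.trans h2)
  have hm1 : (1 : ℝ) ≤ (m₂ : ℝ) := by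
    have : (1 : ℕ) ≤ m₂ := by omega
    exact_mod_cast this
  have hpos : ∀ a : ℕ, (0 : ℝ) < (m₂ : ℝ) ^ a := fun a =>
    pow_pos (by linarith) a
  have hxzval : symDist m₂ x z = ((m₂ : ℝ) ^ w)⁻¹ := by
    unfold symDist; rw [if_neg hxz]
  have hxyval : symDist m₂ x y = ((m₂ : ℝ) ^ sInf { k | x k ≠ y k })⁻¹ := by
    unfold symDist; rw [if_neg hxy]
  have hyzval : symDist m₂ y z = ((m₂ : ℝ) ^ sInf { k | y k ≠ z k })⁻¹ := by
    unfold symDist; rw [if_neg hyz]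
  rcases hkey with hk | hk
  · have : ((m₂ : ℝ) ^ w)⁻¹ ≤ ((m₂ : ℝ) ^ sInf { k | x k ≠ y k })⁻¹ := by
      apply inv_anti₀ (hpos _)
      exact pow_le_pow_right₀ hm1 hk
    rw [hxzval, hxyval]
    linarith [symDist_nonneg m₂ y z]
  · have : ((m₂ : ℝ) ^ w)⁻¹ ≤ ((m₂ : ℝ) ^ sInf { k | y k ≠ z k })⁻¹ := by
      apply inv_anti₀ (hpos _)
      exact pow_le_pow_right₀ hm1 hk
    rw [hxzval, hyzval]
    linarith [symDist_nonneg m₂ x y]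

theorem symDist_eq_zero (m₂ : ℕ) (hm : 2 ≤ m₂) {x y : ℕ → ℕ × ℕ}
    (h : symDist m₂ x y = 0) : x = y := by
  by_contra hxy
  have hval : symDist m₂ x y = ((m₂ : ℝ) ^ sInf { k | x k ≠ y k })⁻¹ := by
    unfold symDist; rw [if_neg hxy]
  have hpos : (0 : ℝ) < ((m₂ : ℝ) ^ sInf { k | x k ≠ y k })⁻¹ := by
    apply inv_pos.2
    apply pow_pos
    have : (0 : ℕ) < m₂ := by omega
    exact_mod_cast this
  rw [hval] at h
  linarith

/-- Type synonym for `ℕ → ℕ × ℕ`, carrying the symbolic metric with base `m₂`. -/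
def SymSeq (m₂ : ℕ) : Type := ℕ → ℕ × ℕ

noncomputable instance (m₂ : ℕ) [hf : Fact (2 ≤ m₂)] : MetricSpace (SymSeq m₂) where
  dist x y := symDist m₂ x y
  dist_self x := symDist_self m₂ x
  dist_comm x y := symDist_comm m₂ x y
  dist_triangle x y z := symDist_triangle m₂ hf.out x y z
  eq_of_dist_eq_zero h := symDist_eq_zero m₂ hf.out h

section Digits

set_option maxHeartbeats 1000000

variable {m : ℕ}

/-- Summability of digit series. -/
lemma digit_summable (hm : 2 ≤ m) (u : ℕ → ℕ) (hu : ∀ k, u k < m) :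
    Summable (fun k => (u k : ℝ) / (m : ℝ) ^ (k + 1)) := by
  have hm1 : (1 : ℝ) < m := by exact_mod_cast hm.trans_lt' one_lt_two
  have hm0 : (0 : ℝ) < m := by linarith
  have hg : Summable (fun k : ℕ => ((m : ℝ)⁻¹) ^ k) :=
    summable_geometric_of_lt_one (by positivity) (by
      rw [inv_lt_one_iff₀]; right; exact hm1)
  refine Summable.of_nonneg_of_le (fun k => by positivity) (fun k => ?_) hg
  rw [div_le_iff₀ (by positivity)]
  have h1 : (u k : ℝ) ≤ (m : ℝ) := by exact_mod_cast (hu k).le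
  have h2 : ((m:ℝ)⁻¹)^k * (m:ℝ)^(k+1) = m := by
    rw [pow_succ, ← mul_assoc, ← mul_pow, inv_mul_cancel₀ hm0.ne', one_pow, one_mul]
  rw [h2]; exact h1

/-- head/tail bounds for digit series. -/
lemma digit_head_le (hm : 2 ≤ m) (u : ℕ → ℕ) (hu : ∀ k, u k < m) (n : ℕ) :
    (∑ k ∈ Finset.range n, (u k : ℝ) / (m : ℝ) ^ (k + 1)) ≤
      ∑' k, (u k : ℝ) / (m : ℝ) ^ (k + 1) ∧
    (∑' k, (u k : ℝ) / (m : ℝ) ^ (k + 1)) ≤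
      (∑ k ∈ Finset.range n, (u k : ℝ) / (m : ℝ) ^ (k + 1)) + ((m : ℝ) ^ n)⁻¹ := by
  have hs := digit_summable hm u hu
  have hm0 : (0 : ℝ) < m := by positivity
  have hm1 : (1 : ℝ) < m := by exact_mod_cast hm.trans_lt' one_lt_two
  have hsplit := hs.sum_add_tsum_nat_add n
  constructor
  · rw [← hsplit]
    have : 0 ≤ ∑' k, (u (k + n) : ℝ) / (m : ℝ) ^ (k + n + 1) :=
      tsum_nonneg (fun k => by positivity)
    linarith
  · rw [← hsplit]
    have hinv : (m:ℝ)⁻¹ < 1 := by rw [inv_lt_one_iff₀]; right; exact hm1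
    have htail : (∑' k, (u (k + n) : ℝ) / (m : ℝ) ^ (k + n + 1)) ≤ ((m:ℝ)^n)⁻¹ := by
      have hle : ∀ k, (u (k + n) : ℝ) / (m : ℝ) ^ (k + n + 1) ≤
          ((m:ℝ) - 1) / (m:ℝ)^(n+1) * ((m:ℝ)⁻¹)^k := by
        intro k
        have hd : (u (k+n) : ℝ) ≤ (m:ℝ) - 1 := by
          have h' : u (k+n) + 1 ≤ m := hu (k+n)
          have : ((u (k+n) : ℝ) + 1) ≤ (m : ℝ) := by exact_mod_cast h'
          linarith
        have hrw : ((m:ℝ) - 1) / (m:ℝ)^(n+1) * ((m:ℝ)⁻¹)^k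
            = ((m:ℝ) - 1) / (m:ℝ)^(k+n+1) := by
          rw [inv_pow, ← one_div ((m:ℝ)^k), div_mul_div_comm, mul_one, ← pow_add,
            show n+1+k = k+n+1 from by omega]
        rw [hrw]
        gcongr
      have hsum : Summable (fun k => ((m:ℝ) - 1) / (m:ℝ)^(n+1) * ((m:ℝ)⁻¹)^k) :=
        (summable_geometric_of_lt_one (by positivity) hinv).mul_left _
      calc (∑' k, (u (k + n) : ℝ) / (m : ℝ) ^ (k + n + 1))
          ≤ ∑' k, ((m:ℝ) - 1) / (m:ℝ)^(n+1) * ((m:ℝ)⁻¹)^k :=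
            ((summable_nat_add_iff n).2 hs).tsum_le_tsum hle hsum
        _ = ((m:ℝ) - 1) / (m:ℝ)^(n+1) * (1 - (m:ℝ)⁻¹)⁻¹ := by
            rw [tsum_mul_left, tsum_geometric_of_lt_one (by positivity) hinv]
        _ = ((m:ℝ)^n)⁻¹ := by
            have hm1' : (m:ℝ) - 1 ≠ 0 := by
              intro h; rw [sub_eq_zero] at h; rw [← h] at hm1; linarith
            have hmne : (m:ℝ) ≠ 0 := hm0.ne'
            rw [show (1 - (m:ℝ)⁻¹) = ((m:ℝ)-1)/m by field_simp, inv_div,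
              div_mul_div_comm, pow_succ, inv_eq_one_div,
              div_eq_div_iff (by positivity) (by positivity)]
            ring
    linarith

end Digits
/-- The base-`m` integer formed by the first `n` digits. -/
def digPref (m : ℕ) (u : ℕ → ℕ) (n : ℕ) : ℕ := ∑ k ∈ Finset.range n, u k * m ^ (n - 1 - k)

lemma digPref_cast (m : ℕ) (hm : 2 ≤ m) (u : ℕ → ℕ) (n : ℕ) :
    (digPref m u n : ℝ) = (m:ℝ)^n * ∑ k ∈ Finset.range n, (u k : ℝ) / (m:ℝ)^(k+1) := by
  have hm0 : (0:ℝ) < m := by positivity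
  rw [digPref, Nat.cast_sum, Finset.mul_sum]
  apply Finset.sum_congr rfl
  intro k hk
  rw [Finset.mem_range] at hk
  have hexp : (n - 1 - k) + (k + 1) = n := by omega
  push_cast
  rw [mul_div_assoc', eq_div_iff (by positivity), mul_assoc, ← pow_add, hexp, mul_comm]

/-- value window: `digPref ≤ m^n ⬝ val ≤ digPref + 1`. -/
lemma digPref_window (m : ℕ) (hm : 2 ≤ m) (u : ℕ → ℕ) (hu : ∀ k, u k < m) (n : ℕ) :
    (digPref m u n : ℝ) ≤ (m:ℝ)^n * ∑' k, (u k : ℝ) / (m:ℝ)^(k+1) ∧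
    (m:ℝ)^n * ∑' k, (u k : ℝ) / (m:ℝ)^(k+1) ≤ (digPref m u n : ℝ) + 1 := by
  have hm0 : (0:ℝ) < m := by positivity
  obtain ⟨h1, h2⟩ := digit_head_le hm u hu n
  rw [digPref_cast m hm]
  constructor
  · exact mul_le_mul_of_nonneg_left h1 (by positivity)
  · calc (m:ℝ)^n * ∑' k, (u k : ℝ) / (m:ℝ)^(k+1)
        ≤ (m:ℝ)^n * ((∑ k ∈ Finset.range n, (u k : ℝ) / (m:ℝ)^(k+1)) + ((m:ℝ)^n)⁻¹) :=
          mul_le_mul_of_nonneg_left h2 (by positivity)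
      _ = (m:ℝ)^n * (∑ k ∈ Finset.range n, (u k : ℝ) / (m:ℝ)^(k+1)) + 1 := by
          rw [mul_add, mul_inv_cancel₀ (by positivity)]

/-- digit strings with digits `< m` are determined by `digPref`. -/
lemma digPref_inj (m : ℕ) (hm : 2 ≤ m) : ∀ (n : ℕ) (u v : ℕ → ℕ),
    (∀ k, k < n → u k < m) → (∀ k, k < n → v k < m) →
    digPref m u n = digPref m v n → ∀ k, k < n → u k = v k := by
  intro n
  induction n with
  | zero => intro u v _ _ _ k hk; omega
  | succ n ih =>
    intro u v hu hv heq k hk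
    have hstep : ∀ w : ℕ → ℕ, digPref m w (n+1) = digPref m w n * m + w n := by
      intro w
      rw [digPref, Finset.sum_range_succ, digPref, Finset.sum_mul]
      congr 1
      · apply Finset.sum_congr rfl
        intro j hj
        rw [Finset.mem_range] at hj
        rw [mul_assoc, ← pow_succ, show n - 1 - j + 1 = n + 1 - 1 - j from by omega]
      · simp
    rw [hstep u, hstep v] at heq
    have hun : u n < m := hu n (by omega)
    have hvn : v n < m := hv n (by omega)
    have hmod : u n = v n := by
      have h1 : (digPref m u n * m + u n) % m = u n % m := by
        rw [Nat.add_comm, Nat.add_mul_mod_self_right]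
      have h2 : (digPref m v n * m + v n) % m = v n % m := by
        rw [Nat.add_comm, Nat.add_mul_mod_self_right]
      rw [Nat.mod_eq_of_lt hun] at h1
      rw [Nat.mod_eq_of_lt hvn] at h2
      rw [← h1, heq, h2]
    have hpref : digPref m u n = digPref m v n := by
      have hm0 : 0 < m := by omega
      have : digPref m u n * m = digPref m v n * m := by omega
      exact Nat.eq_of_mul_eq_mul_right hm0 this
    rcases Nat.lt_succ_iff_lt_or_eq.mp hk with h | h
    · exact ih u v (fun j hj => hu j (by omega)) (fun j hj => hv j (by omega)) hpref k h
    · rw [h]; exact hmod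

section Rotation

lemma floor_step (θ a : ℝ) (h0 : 0 < θ) (h1 : θ < 1) :
    ⌊a + θ⌋ = ⌊a⌋ + if 1 - θ ≤ Int.fract a then 1 else 0 := by
  have hfr := Int.fract_nonneg a
  have hfr1 := Int.fract_lt_one a
  have ha : a + θ = (⌊a⌋ : ℝ) + (Int.fract a + θ) := by
    rw [← add_assoc, Int.floor_add_fract]
  rw [ha, Int.floor_intCast_add]
  congr 1
  by_cases h : 1 - θ ≤ Int.fract a
  · rw [if_pos h]
    apply Int.floor_eq_iff.2
    constructor
    · push_cast; linarith
    · push_cast; linarith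
  · rw [if_neg h]
    push_neg at h
    apply Int.floor_eq_iff.2
    constructor
    · push_cast; linarith
    · push_cast; linarith

lemma vseq_count (θ t : ℝ) (h0 : 0 < θ) (h1 : θ < 1) (ht : t ∈ Set.Ico (0:ℝ) 1) (n : ℕ) :
    (Nat.count (fun j => vseq θ t j = true) n : ℤ) = ⌊t + n * θ⌋ := by
  induction n with
  | zero =>
    simp only [Nat.count_zero, Nat.cast_zero, Nat.cast_ofNat, CharP.cast_eq_zero, zero_mul,
      add_zero]
    exact (Int.floor_eq_zero_iff.2 (by exact ht)).symm
  | succ n ih =>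
    rw [Nat.count_succ]
    have hst : t + (n+1 : ℕ) * θ = (t + n * θ) + θ := by push_cast; ring
    rw [hst, floor_step θ _ h0 h1, ← ih]
    have : vseq θ t n = true ↔ 1 - θ ≤ Int.fract (t + n * θ) := by
      rw [vseq]; simp
    by_cases h : 1 - θ ≤ Int.fract (t + n * θ)
    · rw [if_pos h, if_pos (this.2 h)]; push_cast; ring
    · rw [if_neg h, if_neg (fun hh => h (this.1 hh))]; push_cast; ring

lemma count_congr_of_prefix (p q : ℕ → Prop) [DecidablePred p] [DecidablePred q] (n : ℕ)
    (h : ∀ j, j < n → (p j ↔ q j)) : Nat.count p n = Nat.count q n := by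
  induction n with
  | zero => simp
  | succ n ih =>
    rw [Nat.count_succ, Nat.count_succ, ih (fun j hj => h j (by omega))]
    by_cases hp : p n
    · rw [if_pos hp, if_pos ((h n (by omega)).1 hp)]
    · rw [if_neg hp, if_neg (fun hq => hp ((h n (by omega)).2 hq))]

lemma Sset_prefix {θ : ℝ} {τ : ℕ → Bool} (hτ : τ ∈ Sset θ) (n : ℕ) :
    ∃ t ∈ Set.Ico (0:ℝ) 1, ∀ j, j < n → τ j = vseq θ t j := by
  have hopen : IsOpen {u : ℕ → Bool | ∀ j ∈ Finset.range n, u j = τ j} := by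
    have : {u : ℕ → Bool | ∀ j ∈ Finset.range n, u j = τ j} =
        ⋂ j ∈ Finset.range n, (fun u : ℕ → Bool => u j) ⁻¹' {τ j} := by
      ext u; simp
    rw [this]
    apply isOpen_biInter_finset
    intro j _
    exact (continuous_apply j).isOpen_preimage _ (isOpen_discrete _)
  have hmem : τ ∈ {u : ℕ → Bool | ∀ j ∈ Finset.range n, u j = τ j} := fun j _ => rfl
  obtain ⟨v, hv1, hv2⟩ := mem_closure_iff.1 hτ _ hopen hmem
  obtain ⟨t, ht, rfl⟩ := hv2
  exact ⟨t, ht, fun j hj => (hv1 j (Finset.mem_range.2 hj)).symm⟩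

lemma Sset_count {θ : ℝ} {τ : ℕ → Bool} (hτ : τ ∈ Sset θ) (h0 : 0 < θ) (h1 : θ < 1) (n : ℕ) :
    (n : ℝ) * θ - 1 ≤ (Nat.count (fun j => τ j = true) n : ℝ) ∧
    (Nat.count (fun j => τ j = true) n : ℝ) ≤ (n : ℝ) * θ + 1 := by
  obtain ⟨t, ht, hpre⟩ := Sset_prefix hτ n
  have hcnt : Nat.count (fun j => τ j = true) n =
      Nat.count (fun j => vseq θ t j = true) n := by
    apply count_congr_of_prefix
    intro j hj
    rw [hpre j hj]
  have hfloor := vseq_count θ t h0 h1 ht n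
  have hfl : (Nat.count (fun j => vseq θ t j = true) n : ℝ) = (⌊t + n * θ⌋ : ℤ) := by
    exact_mod_cast congrArg (fun z : ℤ => (z : ℝ)) hfloor
  have hlow := Int.sub_one_lt_floor (t + n * θ)
  have hup := Int.floor_le (t + n * θ)
  rw [hcnt, hfl]
  obtain ⟨ht0, ht1⟩ := ht
  constructor <;> linarith

lemma Sset_ones_infinite {θ : ℝ} {τ : ℕ → Bool} (hτ : τ ∈ Sset θ) (h0 : 0 < θ) (h1 : θ < 1) :
    {n | τ n = true}.Infinite := by
  apply Set.infinite_of_not_bddAbove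
  rintro ⟨b, hb⟩
  have hcount : ∀ n, Nat.count (fun j => τ j = true) n ≤ b + 1 := by
    intro n
    rw [Nat.count_eq_card_filter_range]
    calc (Finset.range n |>.filter (fun j => τ j = true)).card
        ≤ (Finset.range (b+1)).card := by
          apply Finset.card_le_card
          intro j hj
          rw [Finset.mem_filter] at hj
          rw [Finset.mem_range]
          have : j ≤ b := hb hj.2
          omega
      _ = b + 1 := by rw [Finset.card_range]
  obtain ⟨n, hn⟩ := exists_nat_gt ((b + 2 : ℝ) / θ)
  have h2 : (b + 2 : ℝ) < n * θ := by
    rw [div_lt_iff₀ h0] at hn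
    linarith
  have h3 := (Sset_count hτ h0 h1 n).1
  have h4 := hcount n
  have h5 : (Nat.count (fun j => τ j = true) n : ℝ) ≤ (b : ℝ) + 1 := by exact_mod_cast h4
  linarith

end Rotation
section Theta

variable {m₁ m₂ : ℕ}

lemma theta_pos (hm₂ : 2 ≤ m₂) (hm : m₂ < m₁) :
    0 < Real.log m₂ / Real.log m₁ ∧ Real.log m₂ / Real.log m₁ < 1 := by
  have h2 : (1:ℝ) < m₂ := by exact_mod_cast hm₂.trans_lt' one_lt_two
  have h1 : (m₂:ℝ) < m₁ := by exact_mod_cast hm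
  have hl2 : 0 < Real.log m₂ := Real.log_pos h2
  have hl1 : Real.log m₂ < Real.log m₁ := Real.log_lt_log (by linarith) h1
  constructor
  · exact div_pos hl2 (by linarith)
  · rw [div_lt_one (by linarith)]; exact hl1

lemma m2_pow_eq_rpow (hm₂ : 2 ≤ m₂) (hm : m₂ < m₁) (n : ℕ) :
    ((m₂:ℝ))^n = (m₁:ℝ) ^ ((n:ℝ) * (Real.log m₂ / Real.log m₁)) := by
  have h2 : (1:ℝ) < m₂ := by exact_mod_cast hm₂.trans_lt' one_lt_two
  have h1 : (1:ℝ) < m₁ := by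
    have hx : (m₂:ℝ) < m₁ := by exact_mod_cast hm
    linarith
  have hl1 : 0 < Real.log m₁ := Real.log_pos h1
  rw [Real.rpow_def_of_pos (by linarith : (0:ℝ) < (m₁:ℝ))]
  rw [show Real.log m₁ * ((n:ℝ) * (Real.log m₂ / Real.log m₁)) = (n:ℝ) * Real.log m₂ by
    field_simp]
  rw [mul_comm, Real.exp_mul, Real.exp_log (by linarith : (0:ℝ) < (m₂:ℝ)),
    Real.rpow_natCast]

/-- if `n·θ ≤ N + 1` then `m₂^n ≤ m₁ · m₁^N`. -/
lemma theta_pow_le (hm₂ : 2 ≤ m₂) (hm : m₂ < m₁) (N n : ℕ)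
    (h : (n:ℝ) * (Real.log m₂ / Real.log m₁) ≤ (N:ℝ) + 1) :
    ((m₂:ℝ))^n ≤ (m₁:ℝ) * (m₁:ℝ)^N := by
  have h1 : (1:ℝ) < m₁ := by
    have hx : (m₂:ℝ) < m₁ := by exact_mod_cast hm
    have hy : (1:ℝ) < m₂ := by exact_mod_cast hm₂.trans_lt' one_lt_two
    linarith
  rw [m2_pow_eq_rpow hm₂ hm n]
  calc (m₁:ℝ) ^ ((n:ℝ) * (Real.log m₂ / Real.log m₁))
      ≤ (m₁:ℝ) ^ ((N:ℝ) + 1) := Real.rpow_le_rpow_of_exponent_le h1.le h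
    _ = (m₁:ℝ) * (m₁:ℝ)^N := by
        rw [show ((N:ℝ)+1) = ((N+1:ℕ):ℝ) by push_cast; ring, Real.rpow_natCast, pow_succ]
        ring

/-- if `N ≤ n·θ + 1` then `m₁^N ≤ m₁ · m₂^n`. -/
lemma theta_pow_le' (hm₂ : 2 ≤ m₂) (hm : m₂ < m₁) (N n : ℕ)
    (h : (N:ℝ) ≤ (n:ℝ) * (Real.log m₂ / Real.log m₁) + 1) :
    ((m₁:ℝ))^N ≤ (m₁:ℝ) * (m₂:ℝ)^n := by
  have h1 : (1:ℝ) < m₁ := by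
    have hx : (m₂:ℝ) < m₁ := by exact_mod_cast hm
    have hy : (1:ℝ) < m₂ := by exact_mod_cast hm₂.trans_lt' one_lt_two
    linarith
  rw [m2_pow_eq_rpow hm₂ hm n]
  calc (m₁:ℝ)^N = (m₁:ℝ) ^ ((N:ℕ):ℝ) := (Real.rpow_natCast _ _).symm
    _ ≤ (m₁:ℝ) ^ ((n:ℝ) * (Real.log m₂ / Real.log m₁) + 1) :=
        Real.rpow_le_rpow_of_exponent_le h1.le h
    _ = (m₁:ℝ) * (m₁:ℝ) ^ ((n:ℝ) * (Real.log m₂ / Real.log m₁)) := by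
        rw [Real.rpow_add (by linarith : (0:ℝ) < (m₁:ℝ)), Real.rpow_one]
        ring

end Theta

section SymSeqFacts

variable {m₂ : ℕ} [hf : Fact (2 ≤ m₂)]

lemma symseq_dist_def (x y : SymSeq m₂) : dist x y = symDist m₂ x y := rfl

lemma symseq_dist_le_of_agree (n : ℕ) (x y : SymSeq m₂)
    (h : ∀ j, j < n → x j = y j) : dist x y ≤ (((m₂:ℝ))^n)⁻¹ := by
  have hm2 : (1:ℝ) ≤ m₂ := by
    have := hf.out; exact_mod_cast by omega
  rw [symseq_dist_def]; unfold symDist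
  split
  · positivity
  · next hxy =>
    have hne : { k | x k ≠ y k }.Nonempty := Set.nonempty_def.2 (Function.ne_iff.1 hxy)
    have hmem := Nat.sInf_mem hne
    have hge : n ≤ sInf { k | x k ≠ y k } := by
      by_contra hc
      push_neg at hc
      exact hmem (h _ hc)
    apply inv_anti₀ (by positivity)
    exact pow_le_pow_right₀ hm2 hge

lemma symseq_dist_eq (x y : SymSeq m₂) (hxy : x ≠ y) :
    dist x y = (((m₂:ℝ))^(sInf { k | x k ≠ y k }))⁻¹ ∧
    ∀ j, j < sInf { k | x k ≠ y k } → x j = y j := by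
  constructor
  · rw [symseq_dist_def]; unfold symDist; exact if_neg hxy
  · intro j hj
    by_contra hc
    exact absurd (Nat.sInf_le (by exact hc : j ∈ { k | x k ≠ y k })) (by omega)

end SymSeqFacts
section Lip

variable {m₁ m₂ : ℕ} [hf : Fact (2 ≤ m₂)]

lemma piSym_fst (τ : ℕ → Bool) (x : SymSeq m₂) :
    (piSym m₁ m₂ τ x).1 = ∑' k, ((x (nthOne τ k)).1 : ℝ) / (m₁:ℝ)^(k+1) := rfl

lemma piSym_snd (τ : ℕ → Bool) (x : SymSeq m₂) :
    (piSym m₁ m₂ τ x).2 = ∑' k, ((x k).2 : ℝ) / (m₂:ℝ)^(k+1) := rfl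

/-- common-prefix estimate for digit series values. -/
lemma val_diff_le {m : ℕ} (hm : 2 ≤ m) (u v : ℕ → ℕ) (hu : ∀ k, u k < m)
    (hv : ∀ k, v k < m) (n : ℕ) (h : ∀ k, k < n → u k = v k) :
    |(∑' k, (u k : ℝ) / (m:ℝ)^(k+1)) - ∑' k, (v k : ℝ) / (m:ℝ)^(k+1)| ≤ ((m:ℝ)^n)⁻¹ := by
  obtain ⟨hu1, hu2⟩ := digit_head_le hm u hu n
  obtain ⟨hv1, hv2⟩ := digit_head_le hm v hv n
  have hp : (∑ k ∈ Finset.range n, (u k : ℝ) / (m:ℝ)^(k+1)) =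
      ∑ k ∈ Finset.range n, (v k : ℝ) / (m:ℝ)^(k+1) := by
    apply Finset.sum_congr rfl
    intro k hk
    rw [h k (Finset.mem_range.1 hk)]
  rw [abs_le]
  constructor <;> [skip; skip] <;> (rw [hp] at hu1 hu2 <;> try skip) <;> linarith

lemma piSym_dist_le (hm : m₂ < m₁) (τ : ℕ → Bool)
    (hτ : τ ∈ Sset (Real.log m₂ / Real.log m₁)) (x y : SymSeq m₂)
    (hbx : ∀ k, (x k).2 < m₂) (hax : ∀ k, (x (nthOne τ k)).1 < m₁)
    (hby : ∀ k, (y k).2 < m₂) (hay : ∀ k, (y (nthOne τ k)).1 < m₁) :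
    dist (piSym m₁ m₂ τ x) (piSym m₁ m₂ τ y) ≤ (m₁:ℝ) * dist x y := by
  have hm₂2 := hf.out
  have hm₁2 : 2 ≤ m₁ := by omega
  have hm₁1 : (1:ℝ) ≤ m₁ := by exact_mod_cast by omega
  by_cases hxy : x = y
  · subst hxy; simp
  obtain ⟨hdist, hagree⟩ := symseq_dist_eq x y hxy
  set n := sInf { k | x k ≠ y k } with hn
  set N := Nat.count (fun j => τ j = true) n with hN
  obtain ⟨hθ0, hθ1⟩ := theta_pos hm₂2 hm
  have hcnt := (Sset_count hτ hθ0 hθ1 n).1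
  -- second coordinates
  have h2 : |(piSym m₁ m₂ τ x).2 - (piSym m₁ m₂ τ y).2| ≤ ((m₂:ℝ)^n)⁻¹ := by
    rw [piSym_snd, piSym_snd]
    exact val_diff_le hm₂2 _ _ hbx hby n (fun k hk => by rw [hagree k hk])
  -- first coordinates
  have h1 : |(piSym m₁ m₂ τ x).1 - (piSym m₁ m₂ τ y).1| ≤ ((m₁:ℝ)^N)⁻¹ := by
    rw [piSym_fst, piSym_fst]
    apply val_diff_le hm₁2 _ _ hax hay N
    intro k hk
    have hlt : nthOne τ k < n := Nat.nth_lt_of_lt_count hk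
    rw [hagree _ hlt]
  have hNineq : ((m₁:ℝ)^N)⁻¹ ≤ (m₁:ℝ) * ((m₂:ℝ)^n)⁻¹ := by
    have hple := theta_pow_le hm₂2 hm N n (by linarith)
    have hpos1 : (0:ℝ) < (m₁:ℝ)^N := by positivity
    have hpos2 : (0:ℝ) < (m₂:ℝ)^n := by positivity
    rw [inv_eq_one_div, ← div_eq_mul_inv, div_le_div_iff₀ hpos1 hpos2, one_mul]
    exact hple
  rw [hdist, Prod.dist_eq]
  apply max_le
  · rw [Real.dist_eq]
    exact h1.trans hNineq
  · rw [Real.dist_eq]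
    refine h2.trans ?_
    exact le_mul_of_one_le_left (by positivity) hm₁1

end Lip
section Cover
set_option maxHeartbeats 1600000

variable {m₁ m₂ : ℕ} [hf : Fact (2 ≤ m₂)]

lemma cover_lemma (hm : m₂ < m₁) (τ : ℕ → Bool)
    (hτ : τ ∈ Sset (Real.log m₂ / Real.log m₁))
    (B : Set (SymSeq m₂))
    (hbB : ∀ x ∈ B, ∀ k, ((x : ℕ → ℕ × ℕ) k).2 < m₂)
    (haB : ∀ x ∈ B, ∀ k, ((x : ℕ → ℕ × ℕ) (nthOne τ k)).1 < m₁)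
    (haoff : ∀ x ∈ B, ∀ j, τ j = false → ((x : ℕ → ℕ × ℕ) j).1 = 1)
    (D : ℝ) (hD0 : 0 < D) (hD1 : D ≤ 1)
    (hBdiam : ∀ x ∈ B, ∀ y ∈ B, dist (piSym m₁ m₂ τ x) (piSym m₁ m₂ τ y) ≤ D) :
    ∃ u : Fin 7 × Fin (2*m₁+7) → Set (SymSeq m₂),
      (B ⊆ ⋃ i, u i) ∧ ∀ i, ∀ x ∈ u i, ∀ y ∈ u i, dist x y ≤ (m₂:ℝ) * D := by
  have hm₂2 := hf.out
  have hm₁2 : 2 ≤ m₁ := by omega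
  have hm₂R : (2:ℝ) ≤ m₂ := by exact_mod_cast hm₂2
  have hm₁R : (1:ℝ) < m₁ := by exact_mod_cast by omega
  rcases B.eq_empty_or_nonempty with hB | ⟨x₀, hx₀⟩
  · exact ⟨fun _ => ∅, by simp [hB], by simp⟩
  -- choose scale n
  have hex : ∃ k, (1:ℝ) < D * (m₂:ℝ)^(k+1) := by
    obtain ⟨k, hk⟩ := pow_unbounded_of_one_lt (1/D) (by linarith : (1:ℝ) < m₂)
    refine ⟨k, ?_⟩
    have h1 : (1:ℝ)/D < (m₂:ℝ)^k := hk
    have h2 : (m₂:ℝ)^k ≤ (m₂:ℝ)^(k+1) :=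
      pow_le_pow_right₀ (by linarith) (by omega)
    rw [div_lt_iff₀ hD0] at h1
    calc (1:ℝ) < (m₂:ℝ)^k * D := h1
      _ ≤ (m₂:ℝ)^(k+1) * D := by nlinarith
      _ = D * (m₂:ℝ)^(k+1) := by ring
  set n := Nat.find hex with hndef
  have hn2 : (1:ℝ) < D * (m₂:ℝ)^(n+1) := Nat.find_spec hex
  have hn1 : D * (m₂:ℝ)^n ≤ 1 := by
    rcases Nat.eq_zero_or_pos n with h0 | hpos
    · rw [h0, pow_zero, mul_one]; exact hD1
    · have := Nat.find_min hex (m := n - 1) (by omega)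
      push_neg at this
      have heq : n - 1 + 1 = n := by omega
      rwa [heq] at this
  obtain ⟨hθ0, hθ1⟩ := theta_pos hm₂2 hm
  set N := Nat.count (fun j => τ j = true) n with hNdef
  have hcnt := (Sset_count hτ hθ0 hθ1 n).2
  have hDm1 : D * (m₁:ℝ)^N ≤ m₁ := by
    have hple := theta_pow_le' hm₂2 hm N n (by linarith)
    calc D * (m₁:ℝ)^N ≤ D * ((m₁:ℝ) * (m₂:ℝ)^n) := by nlinarith
      _ = (m₁:ℝ) * (D * (m₂:ℝ)^n) := by ring
      _ ≤ m₁ := by nlinarith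
  -- the class functions
  set g₂ : SymSeq m₂ → ℤ := fun x => (digPref m₂ (fun k => ((x : ℕ → ℕ × ℕ) k).2) n : ℤ)
    with hg₂
  set g₁ : SymSeq m₂ → ℤ := fun x => (digPref m₁ (fun k =>
    ((x : ℕ → ℕ × ℕ) (nthOne τ k)).1) N : ℤ) with hg₁
  -- windows
  have hwin₂ : ∀ x ∈ B, ((g₂ x : ℝ) ≤ (m₂:ℝ)^n * (piSym m₁ m₂ τ x).2 ∧
      (m₂:ℝ)^n * (piSym m₁ m₂ τ x).2 ≤ (g₂ x : ℝ) + 1) := by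
    intro x hx
    have := digPref_window m₂ hm₂2 (fun k => ((x : ℕ → ℕ × ℕ) k).2) (hbB x hx) n
    rw [piSym_snd]
    exact_mod_cast this
  have hwin₁ : ∀ x ∈ B, ((g₁ x : ℝ) ≤ (m₁:ℝ)^N * (piSym m₁ m₂ τ x).1 ∧
      (m₁:ℝ)^N * (piSym m₁ m₂ τ x).1 ≤ (g₁ x : ℝ) + 1) := by
    intro x hx
    have := digPref_window m₁ hm₁2 (fun k => ((x : ℕ → ℕ × ℕ) (nthOne τ k)).1) (haB x hx) N
    rw [piSym_fst]
    exact_mod_cast this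
  -- difference bounds
  have hdiff₂ : ∀ x ∈ B, g₂ x - g₂ x₀ + 3 ∈ Set.Ico (0:ℤ) 7 := by
    intro x hx
    have h1 := hwin₂ x hx
    have h0 := hwin₂ x₀ hx₀
    have hval : |(piSym m₁ m₂ τ x).2 - (piSym m₁ m₂ τ x₀).2| ≤ D := by
      have := hBdiam x hx x₀ hx₀
      rw [Prod.dist_eq] at this
      have h2 := le_max_right (dist (piSym m₁ m₂ τ x).1 (piSym m₁ m₂ τ x₀).1)
        (dist (piSym m₁ m₂ τ x).2 (piSym m₁ m₂ τ x₀).2)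
      rw [← Real.dist_eq]
      linarith
    rw [abs_le] at hval
    have hpow : (0:ℝ) < (m₂:ℝ)^n := by positivity
    have hr1 : (g₂ x : ℝ) - g₂ x₀ ≤ 2 := by nlinarith [h1.1, h1.2, h0.1, h0.2]
    have hr2 : (g₂ x₀ : ℝ) - g₂ x ≤ 2 := by nlinarith [h1.1, h1.2, h0.1, h0.2]
    constructor
    · have : (g₂ x₀ : ℝ) - g₂ x ≤ 2 := hr2
      have : (g₂ x₀ : ℤ) - g₂ x ≤ 2 := by exact_mod_cast this
      omega
    · have : (g₂ x : ℤ) - g₂ x₀ ≤ 2 := by exact_mod_cast hr1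
      omega
  have hdiff₁ : ∀ x ∈ B, g₁ x - g₁ x₀ + ((m₁:ℤ) + 3) ∈ Set.Ico (0:ℤ) (2*m₁+7) := by
    intro x hx
    have h1 := hwin₁ x hx
    have h0 := hwin₁ x₀ hx₀
    have hval : |(piSym m₁ m₂ τ x).1 - (piSym m₁ m₂ τ x₀).1| ≤ D := by
      have := hBdiam x hx x₀ hx₀
      rw [Prod.dist_eq] at this
      have h2 := le_max_left (dist (piSym m₁ m₂ τ x).1 (piSym m₁ m₂ τ x₀).1)
        (dist (piSym m₁ m₂ τ x).2 (piSym m₁ m₂ τ x₀).2)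
      rw [← Real.dist_eq]
      linarith
    rw [abs_le] at hval
    have hpow : (0:ℝ) < (m₁:ℝ)^N := by positivity
    have hr1 : (g₁ x : ℝ) - g₁ x₀ ≤ (m₁:ℝ) + 1 := by nlinarith [h1.1, h1.2, h0.1, h0.2]
    have hr2 : (g₁ x₀ : ℝ) - g₁ x ≤ (m₁:ℝ) + 1 := by nlinarith [h1.1, h1.2, h0.1, h0.2]
    have hz1 : (g₁ x : ℤ) - g₁ x₀ ≤ (m₁:ℤ) + 1 := by exact_mod_cast hr1
    have hz2 : (g₁ x₀ : ℤ) - g₁ x ≤ (m₁:ℤ) + 1 := by exact_mod_cast hr2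
    constructor
    · omega
    · omega
  -- the cover
  refine ⟨fun i => {x | x ∈ B ∧ g₂ x - g₂ x₀ + 3 = (i.1 : ℤ) ∧
      g₁ x - g₁ x₀ + ((m₁:ℤ) + 3) = (i.2 : ℤ)}, ?_, ?_⟩
  · intro x hx
    obtain ⟨hj0, hj7⟩ := hdiff₂ x hx
    obtain ⟨hi0, hiK⟩ := hdiff₁ x hx
    refine Set.mem_iUnion.2 ⟨⟨⟨(g₂ x - g₂ x₀ + 3).toNat, ?_⟩,
      ⟨(g₁ x - g₁ x₀ + ((m₁:ℤ) + 3)).toNat, ?_⟩⟩, ?_⟩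
    · omega
    · omega
    · refine ⟨hx, ?_, ?_⟩ <;> simp only [Fin.val_mk] <;> omega
  · rintro i x ⟨hxB, hx2, hx1⟩ y ⟨hyB, hy2, hy1⟩
    have hg2eq : digPref m₂ (fun k => ((x : ℕ → ℕ × ℕ) k).2) n =
        digPref m₂ (fun k => ((y : ℕ → ℕ × ℕ) k).2) n := by
      have h' : g₂ x = g₂ y := by omega
      simp only [hg₂] at h'
      exact_mod_cast h' 
    have hg1eq : digPref m₁ (fun k => ((x : ℕ → ℕ × ℕ) (nthOne τ k)).1) N =
        digPref m₁ (fun k => ((y : ℕ → ℕ × ℕ) (nthOne τ k)).1) N := by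
      have h' : g₁ x = g₁ y := by omega
      simp only [hg₁] at h'
      exact_mod_cast h' 
    have hb := digPref_inj m₂ hm₂2 n _ _ (fun k _ => hbB x hxB k) (fun k _ => hbB y hyB k)
      hg2eq
    have ha := digPref_inj m₁ hm₁2 N _ _ (fun k _ => haB x hxB k) (fun k _ => haB y hyB k)
      hg1eq
    have hagree : ∀ j, j < n → (x : ℕ → ℕ × ℕ) j = (y : ℕ → ℕ × ℕ) j := by
      intro j hj
      have hsnd := hb j hj
      have hfst : ((x : ℕ → ℕ × ℕ) j).1 = ((y : ℕ → ℕ × ℕ) j).1 := by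
        cases hcase : τ j with
        | false => rw [haoff x hxB j hcase, haoff y hyB j hcase]
        | true =>
          have hpj : (fun j => τ j = true) j := hcase
          have hnth : Nat.nth (fun j => τ j = true) (Nat.count (fun j => τ j = true) j) = j :=
            Nat.nth_count hpj
          have hklt : Nat.count (fun j => τ j = true) j < N := by
            have hle : Nat.count (fun j => τ j = true) (j+1) ≤ N :=
              Nat.count_monotone _ (by omega)
            rw [Nat.count_succ, if_pos hpj] at hle
            omega
          have := ha (Nat.count (fun j => τ j = true) j) hklt
          rw [nthOne, hnth] at this
          exact this
      exact Prod.ext hfst hsnd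
    have hdle := symseq_dist_le_of_agree n x y hagree
    refine hdle.trans ?_
    rw [inv_le_iff_one_le_mul₀ (by positivity)]
    refine le_of_lt ?_
    calc (1:ℝ) < D * (m₂:ℝ)^(n+1) := hn2
      _ = (m₂:ℝ) * D * (m₂:ℝ)^n := by ring
end Cover
section Transfer

open MeasureTheory
open scoped ENNReal NNReal

lemma ennreal_sup_rpow_le (X Y : ℝ≥0∞) (d : ℝ) : (X ⊔ Y) ^ d ≤ X ^ d + Y ^ d := by
  rcases le_total X Y with h | h
  · rw [sup_eq_right.2 h]; exact le_add_self
  · rw [sup_eq_left.2 h]; exact le_add_right (le_refl _)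

variable {m₁ m₂ : ℕ} [hf : Fact (2 ≤ m₂)]

set_option maxHeartbeats 2000000 in
lemma transfer [MeasurableSpace (SymSeq m₂)] [BorelSpace (SymSeq m₂)]
    (hm : m₂ < m₁) (τ : ℕ → Bool) (hτ : τ ∈ Sset (Real.log m₂ / Real.log m₁))
    (A : Set (SymSeq m₂))
    (hbA : ∀ x ∈ A, ∀ k, ((x : ℕ → ℕ × ℕ) k).2 < m₂)
    (haA : ∀ x ∈ A, ∀ k, ((x : ℕ → ℕ × ℕ) (nthOne τ k)).1 < m₁)
    (haoff : ∀ x ∈ A, ∀ j, τ j = false → ((x : ℕ → ℕ × ℕ) j).1 = 1)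
    (d : ℝ≥0) (hd : 0 < d)
    (h0 : μH[(d:ℝ)] (piSym m₁ m₂ τ '' A) = 0) : μH[(d:ℝ)] A = 0 := by
  have hm₂2 := hf.out
  have hm₂R : (0:ℝ) < m₂ := by positivity
  have hdR : (0:ℝ) < (d:ℝ) := hd
  set CONST : ℝ≥0∞ := ((7 * (2*m₁+7) : ℕ) : ℝ≥0∞) * (ENNReal.ofReal (m₂:ℝ)) ^ (d:ℝ) * 2
    with hCONST
  have hCONSTne : CONST ≠ ⊤ := by
    apply ENNReal.mul_ne_top
    apply ENNReal.mul_ne_top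
    · exact ENNReal.natCast_ne_top _
    · exact ENNReal.rpow_ne_top_of_nonneg hdR.le ENNReal.ofReal_ne_top
    · exact ENNReal.ofNat_ne_top
  have hQ : ∀ q : ℕ, ∃ t : ℕ × (Fin 7 × Fin (2*m₁+7)) → Set (SymSeq m₂),
      (A ⊆ ⋃ i, t i) ∧
      (∀ i, EMetric.diam (t i) ≤ ENNReal.ofReal ((m₂:ℝ) * (2:ℝ)⁻¹^q)) ∧
      (∑' i, EMetric.diam (t i) ^ (d:ℝ)) ≤ CONST * ENNReal.ofReal ((2:ℝ)⁻¹^q) := by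
    intro q
    set ε : ℝ≥0∞ := ENNReal.ofReal ((2:ℝ)⁻¹^q) with hε
    have hε0 : 0 < ε := by
      rw [hε]; apply ENNReal.ofReal_pos.2; positivity
    have hinf : (⨅ (t : ℕ → Set (ℝ × ℝ)) (_ : piSym m₁ m₂ τ '' A ⊆ ⋃ n, t n)
        (_ : ∀ n, EMetric.diam (t n) ≤ ε),
          ∑' n, ⨆ _ : (t n).Nonempty, EMetric.diam (t n) ^ (d:ℝ)) = 0 := by
      apply le_antisymm _ zero_le
      rw [← h0, Measure.hausdorffMeasure_apply]
      exact le_iSup₂ (f := fun r (_ : 0 < r) => ⨅ (t : ℕ → Set (ℝ × ℝ))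
        (_ : piSym m₁ m₂ τ '' A ⊆ ⋃ n, t n) (_ : ∀ n, EMetric.diam (t n) ≤ r),
          ∑' n, ⨆ _ : (t n).Nonempty, EMetric.diam (t n) ^ (d:ℝ)) ε hε0
    have hlt : (⨅ (t : ℕ → Set (ℝ × ℝ)) (_ : piSym m₁ m₂ τ '' A ⊆ ⋃ n, t n)
        (_ : ∀ n, EMetric.diam (t n) ≤ ε),
          ∑' n, ⨆ _ : (t n).Nonempty, EMetric.diam (t n) ^ (d:ℝ)) < ε := by
      rw [hinf]; exact hε0
    obtain ⟨s, hs⟩ := iInf_lt_iff.1 hlt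
    obtain ⟨hcov, hs2⟩ := iInf_lt_iff.1 hs
    obtain ⟨hdiam, hsum⟩ := iInf_lt_iff.1 hs2
    set δ : ℕ → ℝ := fun j => min ((2:ℝ)⁻¹^q) (((2:ℝ)⁻¹^(q+j+1)) ^ ((1:ℝ)/(d:ℝ))) with hδ
    have hδ0 : ∀ j, 0 < δ j := by
      intro j
      exact lt_min (by positivity) (Real.rpow_pos_of_pos (by positivity) _)
    have hδle : ∀ j, δ j ≤ (2:ℝ)⁻¹^q := fun j => min_le_left _ _
    set D : ℕ → ℝ := fun j => max (EMetric.diam (s j)).toReal (δ j) with hD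
    have hsne : ∀ j, EMetric.diam (s j) ≠ ⊤ := fun j =>
      ne_top_of_le_ne_top ENNReal.ofReal_ne_top (hdiam j)
    have hDle : ∀ j, D j ≤ (2:ℝ)⁻¹^q := by
      intro j
      apply max_le _ (hδle j)
      exact ENNReal.toReal_le_of_le_ofReal (by positivity) (hdiam j)
    have hD0 : ∀ j, 0 < D j := fun j => lt_max_of_lt_right (hδ0 j)
    have hD1 : ∀ j, D j ≤ 1 := by
      intro j
      refine (hDle j).trans ?_
      calc (2:ℝ)⁻¹^q ≤ 1^q := pow_le_pow_left₀ (by norm_num) (by norm_num) q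
        _ = 1 := one_pow _
    have hexu : ∀ j : ℕ, ∃ u : Fin 7 × Fin (2*m₁+7) → Set (SymSeq m₂),
        ((A ∩ piSym m₁ m₂ τ ⁻¹' (s j)) ⊆ ⋃ i, u i) ∧
        ∀ i, ∀ x ∈ u i, ∀ y ∈ u i, dist x y ≤ (m₂:ℝ) * D j := by
      intro j
      apply cover_lemma hm τ hτ
      · exact fun x hx k => hbA x hx.1 k
      · exact fun x hx k => haA x hx.1 k
      · exact fun x hx k hk => haoff x hx.1 k hk
      · exact hD0 j
      · exact hD1 j
      · intro x hx y hy
        have hex : edist (piSym m₁ m₂ τ x) (piSym m₁ m₂ τ y) ≤ EMetric.diam (s j) :=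
          EMetric.edist_le_diam_of_mem hx.2 hy.2
        have h1 : ENNReal.ofReal (dist (piSym m₁ m₂ τ x) (piSym m₁ m₂ τ y)) ≤
            ENNReal.ofReal (EMetric.diam (s j)).toReal := by
          rw [← edist_dist, ENNReal.ofReal_toReal (hsne j)]
          exact hex
        have h2 : dist (piSym m₁ m₂ τ x) (piSym m₁ m₂ τ y) ≤
            (EMetric.diam (s j)).toReal := by
          have h3 := ENNReal.toReal_mono (hsne j) hex
          rwa [edist_dist, ENNReal.toReal_ofReal dist_nonneg] at h3
        exact h2.trans (le_max_left _ _)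
    choose u hu1 hu2 using hexu
    have hbound : ∀ j i, EMetric.diam (u j i) ≤ ENNReal.ofReal ((m₂:ℝ) * D j) := by
      intro j i
      apply EMetric.diam_le
      intro x hx y hy
      rw [edist_dist]
      exact ENNReal.ofReal_le_ofReal (hu2 j i x hx y hy)
    refine ⟨fun p => u p.1 p.2, ?_, ?_, ?_⟩
    · intro x hx
      obtain ⟨j, hj⟩ := Set.mem_iUnion.1 (hcov (Set.mem_image_of_mem _ hx))
      obtain ⟨i, hi⟩ := Set.mem_iUnion.1 (hu1 j ⟨hx, hj⟩)
      exact Set.mem_iUnion.2 ⟨(j, i), hi⟩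
    · intro p
      refine (hbound p.1 p.2).trans (ENNReal.ofReal_le_ofReal ?_)
      have h3 := hDle p.1
      have h4 := hD0 p.1
      nlinarith
    · have hterm : ∀ j : ℕ, (ENNReal.ofReal ((m₂:ℝ) * D j)) ^ (d:ℝ) ≤
          (ENNReal.ofReal (m₂:ℝ)) ^ (d:ℝ) *
            (EMetric.diam (s j) ^ (d:ℝ) + ENNReal.ofReal ((2:ℝ)⁻¹^(q+j+1))) := by
        intro j
        rw [ENNReal.ofReal_mul hm₂R.le, ENNReal.mul_rpow_of_nonneg _ _ hdR.le]
        apply mul_le_mul_right ?_ _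
        have hofD : ENNReal.ofReal (D j) =
            EMetric.diam (s j) ⊔ ENNReal.ofReal (δ j) := by
          simp only [hD]
          rcases le_total (EMetric.diam (s j)).toReal (δ j) with h | h
          · rw [max_eq_right h, sup_eq_right.2 (by
              rw [← ENNReal.ofReal_toReal (hsne j)]
              exact ENNReal.ofReal_le_ofReal h)]
          · rw [max_eq_left h, ENNReal.ofReal_toReal (hsne j), sup_eq_left.2 (by
              rw [← ENNReal.ofReal_toReal (hsne j)]
              exact ENNReal.ofReal_le_ofReal h)]
        rw [hofD]
        refine (ennreal_sup_rpow_le _ _ _).trans ?_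
        apply add_le_add_right
        have hδj : ENNReal.ofReal (δ j) ^ (d:ℝ) ≤
            ENNReal.ofReal (((2:ℝ)⁻¹^(q+j+1)) ^ ((1:ℝ)/(d:ℝ))) ^ (d:ℝ) :=
          ENNReal.rpow_le_rpow (ENNReal.ofReal_le_ofReal (min_le_right _ _)) hdR.le
        refine hδj.trans (le_of_eq ?_)
        rw [ENNReal.ofReal_rpow_of_pos (Real.rpow_pos_of_pos (by positivity) _)]
        rw [← Real.rpow_natCast ((2:ℝ)⁻¹) (q+j+1)]
        rw [← Real.rpow_mul (by positivity), one_div, inv_mul_cancel₀ hdR.ne', Real.rpow_one]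
      calc ∑' p : ℕ × (Fin 7 × Fin (2*m₁+7)), EMetric.diam (u p.1 p.2) ^ (d:ℝ)
          = ∑' j : ℕ, ∑' i : Fin 7 × Fin (2*m₁+7), EMetric.diam (u j i) ^ (d:ℝ) :=
            ENNReal.tsum_prod (f := fun j i => EMetric.diam (u j i) ^ (d:ℝ))
        _ ≤ ∑' j : ℕ, ∑' _i : Fin 7 × Fin (2*m₁+7),
              (ENNReal.ofReal ((m₂:ℝ) * D j)) ^ (d:ℝ) := by
            refine ENNReal.tsum_le_tsum (fun j => ENNReal.tsum_le_tsum (fun i => ?_))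
            exact ENNReal.rpow_le_rpow (hbound j i) hdR.le
        _ = ∑' j : ℕ, ((7 * (2*m₁+7) : ℕ) : ℝ≥0∞) *
              (ENNReal.ofReal ((m₂:ℝ) * D j)) ^ (d:ℝ) := by
            congr 1
            funext j
            rw [tsum_fintype, Finset.sum_const, nsmul_eq_mul]
            congr 2
            simp [Fintype.card_prod]
        _ ≤ ∑' j : ℕ, ((7 * (2*m₁+7) : ℕ) : ℝ≥0∞) * ((ENNReal.ofReal (m₂:ℝ)) ^ (d:ℝ) *
              (EMetric.diam (s j) ^ (d:ℝ) + ENNReal.ofReal ((2:ℝ)⁻¹^(q+j+1)))) :=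
            ENNReal.tsum_le_tsum (fun j => mul_le_mul_right (hterm j) _)
        _ = ((7 * (2*m₁+7) : ℕ) : ℝ≥0∞) * (ENNReal.ofReal (m₂:ℝ)) ^ (d:ℝ) *
              ((∑' j : ℕ, EMetric.diam (s j) ^ (d:ℝ)) +
               (∑' j : ℕ, ENNReal.ofReal ((2:ℝ)⁻¹^(q+j+1)))) := by
            rw [ENNReal.tsum_mul_left]
            rw [ENNReal.tsum_mul_left]
            rw [ENNReal.tsum_add]
            ring
        _ ≤ ((7 * (2*m₁+7) : ℕ) : ℝ≥0∞) * (ENNReal.ofReal (m₂:ℝ)) ^ (d:ℝ) * (ε + ε) := by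
            apply mul_le_mul_right
            apply add_le_add
            · -- ∑ diam^d ≤ ε
              refine le_trans (ENNReal.tsum_le_tsum (fun j => ?_)) hsum.le
              rcases (s j).eq_empty_or_nonempty with h | h
              · rw [h]
                simp [EMetric.diam, Metric.ediam_empty, ENNReal.zero_rpow_of_pos hdR, hd]
              · rw [iSup_pos h]
            · -- geometric sum
              have hsummable : Summable (fun j : ℕ => (2:ℝ)⁻¹^(q+j+1)) := by
                have : (fun j : ℕ => (2:ℝ)⁻¹^(q+j+1)) =
                    fun j : ℕ => (2:ℝ)⁻¹^(q+1) * (2:ℝ)⁻¹^j := by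
                  funext j
                  rw [← pow_add, show q+1+j = q+j+1 from by omega]
                rw [this]
                exact (summable_geometric_of_lt_one (by norm_num) (by norm_num)).mul_left _
              rw [← ENNReal.ofReal_tsum_of_nonneg (fun j => by positivity) hsummable]
              apply ENNReal.ofReal_le_ofReal
              have hcalc : ∑' j : ℕ, (2:ℝ)⁻¹^(q+j+1) = (2:ℝ)⁻¹^(q+1) * 2 := by
                have h1 : (fun j : ℕ => (2:ℝ)⁻¹^(q+j+1)) =
                    fun j : ℕ => (2:ℝ)⁻¹^(q+1) * (2:ℝ)⁻¹^j := by
                  funext j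
                  rw [← pow_add, show q+1+j = q+j+1 from by omega]
                rw [h1, tsum_mul_left, tsum_geometric_inv_two]
              rw [hcalc, pow_succ]
              calc (2:ℝ)⁻¹^q * 2⁻¹ * 2 = (2:ℝ)⁻¹^q := by ring
                _ ≤ (2:ℝ)⁻¹^q := le_refl _
        _ = CONST * ENNReal.ofReal ((2:ℝ)⁻¹^q) := by
            rw [hCONST, hε]
            ring
  -- assemble
  choose t ht1 ht2 ht3 using hQ
  apply le_antisymm _ zero_le
  have hr : Filter.Tendsto (fun q : ℕ => ENNReal.ofReal ((m₂:ℝ) * (2:ℝ)⁻¹^q))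
      Filter.atTop (nhds 0) := by
    have : Filter.Tendsto (fun q : ℕ => (m₂:ℝ) * (2:ℝ)⁻¹^q) Filter.atTop (nhds 0) := by
      have hgeo : Filter.Tendsto (fun q : ℕ => (2:ℝ)⁻¹^q) Filter.atTop (nhds 0) :=
        tendsto_pow_atTop_nhds_zero_of_lt_one (by norm_num) (by norm_num)
      simpa using hgeo.const_mul (m₂:ℝ)
    have := ENNReal.tendsto_ofReal this
    simpa using this
  have hle := Measure.hausdorffMeasure_le_liminf_tsum (d:ℝ) A
    (fun q : ℕ => ENNReal.ofReal ((m₂:ℝ) * (2:ℝ)⁻¹^q)) hr t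
    (Filter.Eventually.of_forall ht2) (Filter.Eventually.of_forall ht1)
  refine hle.trans ?_
  have hc : Filter.Tendsto (fun q : ℕ => CONST * ENNReal.ofReal ((2:ℝ)⁻¹^q))
      Filter.atTop (nhds 0) := by
    have hg : Filter.Tendsto (fun q : ℕ => ENNReal.ofReal ((2:ℝ)⁻¹^q))
        Filter.atTop (nhds 0) := by
      have : Filter.Tendsto (fun q : ℕ => (2:ℝ)⁻¹^q) Filter.atTop (nhds 0) :=
        tendsto_pow_atTop_nhds_zero_of_lt_one (by norm_num) (by norm_num)
      simpa using ENNReal.tendsto_ofReal this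
    have := ENNReal.Tendsto.const_mul hg (Or.inr hCONSTne)
    simpa using this
  calc Filter.liminf (fun q : ℕ => ∑' i, EMetric.diam (t q i) ^ (d:ℝ)) Filter.atTop
      ≤ Filter.liminf (fun q : ℕ => CONST * ENNReal.ofReal ((2:ℝ)⁻¹^q)) Filter.atTop :=
        Filter.liminf_le_liminf (Filter.Eventually.of_forall ht3)
    _ = 0 := hc.liminf_eq

end Transfer

open MeasureTheory in
/-- `π_{τ,ω,η}` preserves Hausdorff dimension of subsets of `X_{τ,ω,η}`. -/
theorem stmt16
    (m₁ m₂ n₁ n₂ : ℕ) [hm₂ : Fact (2 ≤ m₂)] (hm : m₂ < m₁) (hn₁ : 2 ≤ n₁) (hn₂ : 2 ≤ n₂)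
    (θ : ℝ) (hθ : θ = Real.log m₂ / Real.log m₁) (hirr : Irrational θ)
    (Γ Λ : ℕ → Set ℕ)
    (hΓ : ∀ i < n₁, (Γ i).Nonempty ∧ Γ i ⊆ Set.Iio m₁)
    (hΛ : ∀ j < n₂, (Λ j).Nonempty ∧ Λ j ⊆ Set.Iio m₂)
    (τ : ℕ → Bool) (hτ : τ ∈ Sset θ)
    (ω η : ℕ → ℕ) (hω : ∀ k, ω k < n₁) (hη : ∀ k, η k < n₂)
    (A : Set (SymSeq m₂)) (hA : A ⊆ Xset Γ Λ τ ω η) :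
    dimH A = dimH (piSym m₁ m₂ τ '' A) := by
  rw [hθ] at hτ
  have hbA : ∀ x ∈ A, ∀ k, ((x : ℕ → ℕ × ℕ) k).2 < m₂ :=
    fun x hx k => (hΛ (η k) (hη k)).2 ((hA hx).1 k)
  have haA : ∀ x ∈ A, ∀ k, ((x : ℕ → ℕ × ℕ) (nthOne τ k)).1 < m₁ :=
    fun x hx k => (hΓ (ω k) (hω k)).2 ((hA hx).2.1 k)
  have haoff : ∀ x ∈ A, ∀ j, τ j = false → ((x : ℕ → ℕ × ℕ) j).1 = 1 :=
    fun x hx j hj => (hA hx).2.2 j hj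
  borelize (SymSeq m₂)
  apply le_antisymm
  · -- hard direction
    refine dimH_le fun d' hd' => ?_
    by_contra hcon
    push_neg at hcon
    have hd'0 : 0 < d' := by
      rcases (zero_le : 0 ≤ d').eq_or_lt with h | h
      · exfalso
        rw [← h] at hcon
        simp at hcon
      · exact h
    have h0 : μH[(d':ℝ)] (piSym m₁ m₂ τ '' A) = 0 := hausdorffMeasure_of_dimH_lt hcon
    have hz := transfer hm τ hτ A hbA haA haoff d' hd'0 h0
    exact absurd (hz.symm.trans hd') (by simp)
  · -- easy direction: Lipschitz
    have hlip : LipschitzOnWith ((m₁:ℝ)).toNNReal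
        (fun x : SymSeq m₂ => piSym m₁ m₂ τ x) A :=
      LipschitzOnWith.of_dist_le' (fun x hx y hy =>
        piSym_dist_le hm τ hτ x y (hbA x hx) (haA x hx) (hbA y hy) (haA y hy))
    exact hlip.dimH_image_le
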